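/- Let S be a field, p, q ∈ S, and define on S⁴ the maps δ₀ : (u₁,u₂,v₁,v₂) ↦ (u₂, f(u,v), v₂, f(v,u)) with f(u,v) = -u₁-u₂+(p²-q²)/v₂, δ₁ : (u₁,u₂,v₁,v₂) ↦ (u₂, f(u,v), v₂, v₁), δ₂ : (u₁,u₂,v₁,v₂) ↦ (u₂, u₁, v₂, f(v,u)), and δ₃ : (u₁,u₂,v₁,v₂) ↦ (u₂, u₁, v₂, v₁). Then δ₀ = δ₁ ∘ δ₃ ∘ δ₂ = δ₂ ∘ δ₃ ∘ δ₁ wherever both sides are defined. -/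

import Mathlib

/-- The (2,1)-reduction `δ₀` of the two-component potential KdV system is the
composition of its dual maps: `δ₀ = δ₁ ∘ δ₃ ∘ δ₂ = δ₂ ∘ δ₃ ∘ δ₁` wherever defined. -/
theorem stmt4 {S : Type*} [Field S] (p q : S) (x : S × S × S × S)
    (hv2 : x.2.2.2 ≠ 0) (hu2 : x.2.1 ≠ 0) :
    let f : S → S → S → S → S := fun a b _ d => -a - b + (p ^ 2 - q ^ 2) / d
    let δ0 : S × S × S × S → S × S × S × S := fun y =>
      (y.2.1, f y.1 y.2.1 y.2.2.1 y.2.2.2, y.2.2.2, f y.2.2.1 y.2.2.2 y.1 y.2.1)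
    let δ1 : S × S × S × S → S × S × S × S := fun y =>
      (y.2.1, f y.1 y.2.1 y.2.2.1 y.2.2.2, y.2.2.2, y.2.2.1)
    let δ2 : S × S × S × S → S × S × S × S := fun y =>
      (y.2.1, y.1, y.2.2.2, f y.2.2.1 y.2.2.2 y.1 y.2.1)
    let δ3 : S × S × S × S → S × S × S × S := fun y =>
      (y.2.1, y.1, y.2.2.2, y.2.2.1)
    δ0 x = δ1 (δ3 (δ2 x)) ∧ δ0 x = δ2 (δ3 (δ1 x)) := by
  obtain ⟨u1, u2, v1, v2⟩ := x
  intro f δ0 δ1 δ2 δ3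
  simp only [f, δ0, δ1, δ2, δ3, Prod.mk.injEq]
  constructor <;> and_intros <;> first | rfl | trivial | ring
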